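/- Let ω = (ω₁, ω₂) ∈ ℝ² with ω ≠ 0, set ω⊥ = (ω₂, −ω₁), and let s₂ > 1/2 and s₁ > 3s₂/(2s₂ − 1). Then there exists a constant C = C(ω, s₁, s₂) such that for every trigonometric polynomial f on 𝕋² with coefficients f̂ : ℤ² → ℂ and every x ∈ ℝ²: |Σ_{n∈ℤ²} 2πi(ω·n) f̂(n) e^{2πi n·x}| ≤ C·[ (Σ_{n∈ℤ²} (1+(ω·n)²)^{s₁} |f̂(n)|²)^{1/2} + (Σ_{n∈ℤ²} (1+(ω⊥·n)²)^{s₂} |f̂(n)|²)^{1/2} ]. -/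

import Mathlib

open scoped Real

/-- 1D summability: `∑_{j∈ℤ} (1+j²)^(-α) < ∞` when `α > 1/2`. -/
lemma aux_sum_1d {α : ℝ} (hα : 1 / 2 < α) :
    Summable (fun j : ℤ => (1 + (j : ℝ) ^ 2) ^ (-α)) := by
  have h2α : (1 : ℝ) < 2 * α := by linarith
  have hmaj : Summable (fun j : ℤ => |(j : ℝ)| ^ (-(2 * α)) + if j = 0 then (1 : ℝ) else 0) := by
    refine (Real.summable_abs_int_rpow h2α).add ?_
    exact summable_of_ne_finset_zero (s := {0}) (by intro a ha; simp at ha ⊢; exact ha)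
  refine hmaj.of_nonneg_of_le (fun j => Real.rpow_nonneg (by positivity) _) (fun j => ?_)
  rcases eq_or_ne j 0 with rfl | hj
  · simp [Real.zero_rpow (by linarith : -(2*α) ≠ 0)]
  · have hj1 : (1 : ℝ) ≤ |(j : ℝ)| := by
      rw [← Int.cast_abs]
      exact_mod_cast Int.one_le_abs (by simpa using hj)
    have key : |(j : ℝ)| ^ (-(2 * α)) = ((|(j:ℝ)|^2) : ℝ) ^ (-α) := by
      rw [← Real.rpow_natCast |(j:ℝ)| 2, ← Real.rpow_mul (abs_nonneg _)]
      norm_num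
    have hle : ((|(j:ℝ)|^2) : ℝ) ^ (-α) ≥ (1 + (j:ℝ)^2) ^ (-α) := by
      apply Real.rpow_le_rpow_of_nonpos (by positivity) _ (by linarith)
      rw [sq_abs]; linarith
    calc (1 + (j : ℝ) ^ 2) ^ (-α) ≤ (|(j:ℝ)|^2) ^ (-α) := hle
    _ = |(j : ℝ)| ^ (-(2 * α)) := key.symm
    _ ≤ _ := by simp [hj]


/-- `b^(-γ) ≤ 4^γ * a^(-γ)` when `0 < a ≤ 4b`. -/
lemma rpow_cell {γ : ℝ} (hγ : 0 ≤ γ) {a b : ℝ} (ha : 0 < a) (hab : a ≤ 4 * b) :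
    b ^ (-γ) ≤ 4 ^ γ * a ^ (-γ) := by
  have hb : 0 < b := by linarith
  have h1 : b ^ (-γ) ≤ (a / 4) ^ (-γ) :=
    Real.rpow_le_rpow_of_nonpos (by positivity) (by linarith) (by linarith)
  have h2 : (a / 4) ^ (-γ) = 4 ^ γ * a ^ (-γ) := by
    rw [Real.div_rpow ha.le (by norm_num), Real.rpow_neg (by norm_num : (0:ℝ) ≤ 4),
      div_inv_eq_mul, mul_comm]
  rw [← h2]; exact h1

/-- floor-cell comparison: `1 + ⌊x⌋² ≤ 4 (1 + x²)`. -/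
lemma cell_bound (x : ℝ) : 1 + (⌊x⌋ : ℝ) ^ 2 ≤ 4 * (1 + x ^ 2) := by
  have h1 := Int.floor_le x
  have h2 := Int.lt_floor_add_one x
  nlinarith [mul_nonneg (sub_nonneg.2 h1) (by linarith : (0:ℝ) ≤ (⌊x⌋:ℝ) + 1 - x),
    sq_nonneg ((⌊x⌋:ℝ) - x), sq_nonneg ((⌊x⌋:ℝ) + x + 1), sq_nonneg x, sq_nonneg ((⌊x⌋:ℝ))]

/-- Generalized 2D summability: if a change of coordinates `n ↦ (u n, v n)` has
fibers of unit cells of bounded cardinality, then the product weight is summable. -/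
lemma aux_sum_2d_gen {α β : ℝ} (hα : 1 / 2 < α) (hβ : 1 / 2 < β)
    (u v : ℤ × ℤ → ℝ) (D : ℤ)
    (hfib : ∀ n m : ℤ × ℤ, |u n - u m| < 1 → |v n - v m| < 1 →
      |n.1 - m.1| ≤ D ∧ |n.2 - m.2| ≤ D) :
    Summable (fun n : ℤ × ℤ => (1 + u n ^ 2) ^ (-α) * (1 + v n ^ 2) ^ (-β)) := by
  classical
  have hF0 : ∀ p : ℤ × ℤ, 0 ≤ (1 + (p.1 : ℝ) ^ 2) ^ (-α) * (1 + (p.2 : ℝ) ^ 2) ^ (-β) :=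
    fun p => mul_nonneg (Real.rpow_nonneg (by positivity) _) (Real.rpow_nonneg (by positivity) _)
  have hFsum : Summable (fun p : ℤ × ℤ => (1 + (p.1 : ℝ) ^ 2) ^ (-α) * (1 + (p.2 : ℝ) ^ 2) ^ (-β)) :=
    (aux_sum_1d hα).mul_of_nonneg (aux_sum_1d hβ)
      (fun j => Real.rpow_nonneg (by positivity) _)
      (fun j => Real.rpow_nonneg (by positivity) _)
  set M : ℕ := ((2 * D + 1).toNat) ^ 2 with hM
  -- fiber bound
  have hfiber : ∀ (y : ℤ × ℤ) (t : Finset (ℤ × ℤ)),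
      (∀ n ∈ t, (⌊u n⌋, ⌊v n⌋) = y) → t.card ≤ M := by
    intro y t ht
    rcases t.eq_empty_or_nonempty with rfl | ⟨n₀, hn₀⟩
    · simp
    have hsub : t ⊆ Finset.Icc (n₀.1 - D, n₀.2 - D) (n₀.1 + D, n₀.2 + D) := by
      intro n hn
      have hΦn : ((⌊u n⌋, ⌊v n⌋) : ℤ × ℤ) = (⌊u n₀⌋, ⌊v n₀⌋) := (ht n hn).trans (ht n₀ hn₀).symm
      have hu1 : ⌊u n⌋ = ⌊u n₀⌋ := congrArg Prod.fst hΦn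
      have hv1 : ⌊v n⌋ = ⌊v n₀⌋ := congrArg Prod.snd hΦn
      have hud : |u n - u n₀| < 1 := by
        have h1 := Int.floor_le (u n); have h2 := Int.lt_floor_add_one (u n)
        have h3 := Int.floor_le (u n₀); have h4 := Int.lt_floor_add_one (u n₀)
        rw [hu1] at h1 h2
        rw [abs_lt]; constructor <;> linarith
      have hvd : |v n - v n₀| < 1 := by
        have h1 := Int.floor_le (v n); have h2 := Int.lt_floor_add_one (v n)
        have h3 := Int.floor_le (v n₀); have h4 := Int.lt_floor_add_one (v n₀)
        rw [hv1] at h1 h2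
        rw [abs_lt]; constructor <;> linarith
      obtain ⟨hi1, hi2⟩ := hfib n n₀ hud hvd
      rw [Finset.mem_Icc]
      rw [abs_le] at hi1 hi2
      exact ⟨⟨by omega, by omega⟩, ⟨by omega, by omega⟩⟩
    calc t.card ≤ (Finset.Icc (n₀.1 - D, n₀.2 - D) (n₀.1 + D, n₀.2 + D)).card :=
          Finset.card_le_card hsub
      _ = (Finset.Icc (n₀.1 - D) (n₀.1 + D)).card * (Finset.Icc (n₀.2 - D) (n₀.2 + D)).card :=
          Finset.card_Icc_prod _ _
      _ = M := by
          rw [Int.card_Icc, Int.card_Icc, hM,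
            show n₀.1 + D + 1 - (n₀.1 - D) = 2 * D + 1 by ring,
            show n₀.2 + D + 1 - (n₀.2 - D) = 2 * D + 1 by ring, sq]
  -- pointwise bound
  have hpt : ∀ n : ℤ × ℤ,
      (1 + u n ^ 2) ^ (-α) * (1 + v n ^ 2) ^ (-β) ≤
        (4 ^ α * 4 ^ β) * ((1 + ((⌊u n⌋ : ℤ) : ℝ) ^ 2) ^ (-α) *
          (1 + ((⌊v n⌋ : ℤ) : ℝ) ^ 2) ^ (-β)) := by
    intro n
    have b1 : (1 + u n ^ 2) ^ (-α) ≤ 4 ^ α * (1 + (⌊u n⌋ : ℝ) ^ 2) ^ (-α) :=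
      rpow_cell (by linarith) (by positivity) (cell_bound (u n))
    have b2 : (1 + v n ^ 2) ^ (-β) ≤ 4 ^ β * (1 + (⌊v n⌋ : ℝ) ^ 2) ^ (-β) :=
      rpow_cell (by linarith) (by positivity) (cell_bound (v n))
    calc (1 + u n ^ 2) ^ (-α) * (1 + v n ^ 2) ^ (-β)
        ≤ (4 ^ α * (1 + (⌊u n⌋ : ℝ) ^ 2) ^ (-α)) * (4 ^ β * (1 + (⌊v n⌋ : ℝ) ^ 2) ^ (-β)) := by
          apply mul_le_mul b1 b2 (Real.rpow_nonneg (by positivity) _) (by positivity)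
      _ = _ := by ring
  -- total bound over any finset
  apply summable_of_sum_le
    (c := (4 ^ α * 4 ^ β) * ((M : ℝ) *
      ∑' p : ℤ × ℤ, (1 + (p.1 : ℝ) ^ 2) ^ (-α) * (1 + (p.2 : ℝ) ^ 2) ^ (-β)))
  · intro n
    exact mul_nonneg (Real.rpow_nonneg (by positivity) _) (Real.rpow_nonneg (by positivity) _)
  · intro t
    calc ∑ n ∈ t, (1 + u n ^ 2) ^ (-α) * (1 + v n ^ 2) ^ (-β)
        ≤ ∑ n ∈ t, (4 ^ α * 4 ^ β) * ((1 + ((⌊u n⌋ : ℤ) : ℝ) ^ 2) ^ (-α) *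
            (1 + ((⌊v n⌋ : ℤ) : ℝ) ^ 2) ^ (-β)) := Finset.sum_le_sum fun n _ => hpt n
      _ = (4 ^ α * 4 ^ β) * ∑ n ∈ t, ((1 + ((⌊u n⌋ : ℤ) : ℝ) ^ 2) ^ (-α) *
            (1 + ((⌊v n⌋ : ℤ) : ℝ) ^ 2) ^ (-β)) := by rw [Finset.mul_sum]
      _ ≤ (4 ^ α * 4 ^ β) * ((M : ℝ) *
            ∑' p : ℤ × ℤ, (1 + (p.1 : ℝ) ^ 2) ^ (-α) * (1 + (p.2 : ℝ) ^ 2) ^ (-β)) := by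
          have hfin : ∑ n ∈ t, ((1 + ((⌊u n⌋ : ℤ) : ℝ) ^ 2) ^ (-α) *
              (1 + ((⌊v n⌋ : ℤ) : ℝ) ^ 2) ^ (-β)) ≤ (M : ℝ) *
              ∑' p : ℤ × ℤ, (1 + (p.1 : ℝ) ^ 2) ^ (-α) * (1 + (p.2 : ℝ) ^ 2) ^ (-β) := by
            rw [show ∑ n ∈ t, ((1 + ((⌊u n⌋ : ℤ) : ℝ) ^ 2) ^ (-α) *
                (1 + ((⌊v n⌋ : ℤ) : ℝ) ^ 2) ^ (-β)) =
                ∑ y ∈ t.image (fun n => (⌊u n⌋, ⌊v n⌋)),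
                  (t.filter fun n => (⌊u n⌋, ⌊v n⌋) = y).card •
                    ((1 + (y.1 : ℝ) ^ 2) ^ (-α) * (1 + (y.2 : ℝ) ^ 2) ^ (-β)) from
              Finset.sum_comp
                (fun p : ℤ × ℤ => (1 + (p.1 : ℝ) ^ 2) ^ (-α) * (1 + (p.2 : ℝ) ^ 2) ^ (-β))
                (fun n => (⌊u n⌋, ⌊v n⌋))]
            have step1 : ∑ y ∈ t.image (fun n => (⌊u n⌋, ⌊v n⌋)),
                (t.filter fun n => (⌊u n⌋, ⌊v n⌋) = y).card •
                  ((1 + (y.1 : ℝ) ^ 2) ^ (-α) * (1 + (y.2 : ℝ) ^ 2) ^ (-β))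
                ≤ ∑ y ∈ t.image (fun n => (⌊u n⌋, ⌊v n⌋)),
                  (M : ℝ) * ((1 + (y.1 : ℝ) ^ 2) ^ (-α) * (1 + (y.2 : ℝ) ^ 2) ^ (-β)) := by
              apply Finset.sum_le_sum
              intro y hy
              rw [nsmul_eq_mul]
              apply mul_le_mul_of_nonneg_right _ (hF0 y)
              exact_mod_cast hfiber y _ (fun n hn => (Finset.mem_filter.1 hn).2)
            refine step1.trans ?_
            rw [← Finset.mul_sum]
            exact mul_le_mul_of_nonneg_left
              (hFsum.sum_le_tsum _ (fun p _ => hF0 p)) (by positivity)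
          exact mul_le_mul_of_nonneg_left hfin (by positivity)

/-- 2D summability with two skew weights. -/
lemma aux_sum_2d (ω : ℝ × ℝ) (hω : ω ≠ 0) {α β : ℝ} (hα : 1 / 2 < α) (hβ : 1 / 2 < β) :
    Summable (fun n : ℤ × ℤ =>
      (1 + (ω.1 * (n.1 : ℝ) + ω.2 * (n.2 : ℝ)) ^ 2) ^ (-α) *
      (1 + (ω.2 * (n.1 : ℝ) - ω.1 * (n.2 : ℝ)) ^ 2) ^ (-β)) := by
  have hW : 0 < ω.1 ^ 2 + ω.2 ^ 2 := by
    have h : ω.1 ≠ 0 ∨ ω.2 ≠ 0 := by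
      by_contra h; push_neg at h; exact hω (Prod.ext_iff.2 ⟨h.1, h.2⟩)
    rcases h with h | h
    · positivity
    · positivity
  apply aux_sum_2d_gen hα hβ _ _ ⌈(|ω.1| + |ω.2|) / (ω.1 ^ 2 + ω.2 ^ 2)⌉
  intro n m hud hvd
  set un := ω.1 * (n.1 : ℝ) + ω.2 * (n.2 : ℝ)
  set um := ω.1 * (m.1 : ℝ) + ω.2 * (m.2 : ℝ)
  set vn := ω.2 * (n.1 : ℝ) - ω.1 * (n.2 : ℝ)
  set vm := ω.2 * (m.1 : ℝ) - ω.1 * (m.2 : ℝ)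
  have key1 : ((n.1 - m.1 : ℤ) : ℝ) = (ω.1 * (un - um) + ω.2 * (vn - vm)) / (ω.1 ^ 2 + ω.2 ^ 2) := by
    field_simp [un, um, vn, vm]
    push_cast
    ring
  have key2 : ((n.2 - m.2 : ℤ) : ℝ) = (ω.2 * (un - um) - ω.1 * (vn - vm)) / (ω.1 ^ 2 + ω.2 ^ 2) := by
    field_simp [un, um, vn, vm]
    push_cast
    ring
  have hb1 : |ω.1 * (un - um) + ω.2 * (vn - vm)| ≤ |ω.1| + |ω.2| := by
    calc |ω.1 * (un - um) + ω.2 * (vn - vm)|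
        ≤ |ω.1 * (un - um)| + |ω.2 * (vn - vm)| := abs_add_le _ _
      _ ≤ |ω.1| * 1 + |ω.2| * 1 := by
          rw [abs_mul, abs_mul]
          exact add_le_add (mul_le_mul_of_nonneg_left hud.le (abs_nonneg _))
            (mul_le_mul_of_nonneg_left hvd.le (abs_nonneg _))
      _ = |ω.1| + |ω.2| := by ring
  have hb2 : |ω.2 * (un - um) - ω.1 * (vn - vm)| ≤ |ω.1| + |ω.2| := by
    calc |ω.2 * (un - um) - ω.1 * (vn - vm)|
        ≤ |ω.2 * (un - um)| + |ω.1 * (vn - vm)| := abs_sub _ _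
      _ ≤ |ω.2| * 1 + |ω.1| * 1 := by
          rw [abs_mul, abs_mul]
          exact add_le_add (mul_le_mul_of_nonneg_left hud.le (abs_nonneg _))
            (mul_le_mul_of_nonneg_left hvd.le (abs_nonneg _))
      _ = |ω.1| + |ω.2| := by ring
  constructor
  · have habs : |((n.1 - m.1 : ℤ) : ℝ)| ≤ ((⌈(|ω.1| + |ω.2|) / (ω.1 ^ 2 + ω.2 ^ 2)⌉ : ℤ) : ℝ) := by
      rw [key1, abs_div, abs_of_pos hW]
      calc |ω.1 * (un - um) + ω.2 * (vn - vm)| / (ω.1 ^ 2 + ω.2 ^ 2)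
          ≤ (|ω.1| + |ω.2|) / (ω.1 ^ 2 + ω.2 ^ 2) := by gcongr
        _ ≤ _ := Int.le_ceil _
    rw [← Int.cast_abs] at habs; exact_mod_cast habs
  · have habs : |((n.2 - m.2 : ℤ) : ℝ)| ≤ ((⌈(|ω.1| + |ω.2|) / (ω.1 ^ 2 + ω.2 ^ 2)⌉ : ℤ) : ℝ) := by
      rw [key2, abs_div, abs_of_pos hW]
      calc |ω.2 * (un - um) - ω.1 * (vn - vm)| / (ω.1 ^ 2 + ω.2 ^ 2)
          ≤ (|ω.1| + |ω.2|) / (ω.1 ^ 2 + ω.2 ^ 2) := by gcongr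
        _ ≤ _ := Int.le_ceil _
    rw [← Int.cast_abs] at habs; exact_mod_cast habs


/-- pointwise interpolation bound. -/
lemma pointwise_bound {s₁ s₂ θ : ℝ} (hθ0 : 0 ≤ θ) (hθ1 : θ ≤ 1) (U V : ℝ) :
    (2 * π * U) ^ 2 / ((1 + U ^ 2) ^ s₁ + (1 + V ^ 2) ^ s₂) ≤
      (2 * π) ^ 2 * ((1 + U ^ 2) ^ (-(θ * s₁ - 1)) * (1 + V ^ 2) ^ (-((1 - θ) * s₂))) := by
  set A : ℝ := 1 + U ^ 2 with hA
  set B : ℝ := 1 + V ^ 2 with hB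
  have hA1 : (1 : ℝ) ≤ A := by simp [hA]; positivity
  have hB1 : (1 : ℝ) ≤ B := by simp [hB]; positivity
  have hA0 : (0 : ℝ) < A := by linarith
  have hB0 : (0 : ℝ) < B := by linarith
  set M : ℝ := max (A ^ s₁) (B ^ s₂) with hM
  have hM0 : 0 < M := lt_max_of_lt_left (Real.rpow_pos_of_pos hA0 _)
  have hden : A ^ (θ * s₁) * B ^ ((1 - θ) * s₂) ≤ A ^ s₁ + B ^ s₂ := by
    have e1 : A ^ (θ * s₁) = (A ^ s₁) ^ θ := by
      rw [← Real.rpow_mul hA0.le, mul_comm]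
    have e2 : B ^ ((1 - θ) * s₂) = (B ^ s₂) ^ (1 - θ) := by
      rw [← Real.rpow_mul hB0.le, mul_comm]
    have l1 : (A ^ s₁) ^ θ ≤ M ^ θ :=
      Real.rpow_le_rpow (Real.rpow_nonneg hA0.le _) (le_max_left _ _) hθ0
    have l2 : (B ^ s₂) ^ (1 - θ) ≤ M ^ (1 - θ) :=
      Real.rpow_le_rpow (Real.rpow_nonneg hB0.le _) (le_max_right _ _) (by linarith)
    calc A ^ (θ * s₁) * B ^ ((1 - θ) * s₂) = (A ^ s₁) ^ θ * (B ^ s₂) ^ (1 - θ) := by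
          rw [e1, e2]
      _ ≤ M ^ θ * M ^ (1 - θ) :=
          mul_le_mul l1 l2 (Real.rpow_nonneg (Real.rpow_nonneg hB0.le _) _)
            (Real.rpow_nonneg hM0.le _)
      _ = M := by rw [← Real.rpow_add hM0, add_sub_cancel, Real.rpow_one]
      _ ≤ A ^ s₁ + B ^ s₂ :=
          max_le_add_of_nonneg (Real.rpow_nonneg hA0.le _) (Real.rpow_nonneg hB0.le _)
  have hd0 : 0 < A ^ (θ * s₁) * B ^ ((1 - θ) * s₂) :=
    mul_pos (Real.rpow_pos_of_pos hA0 _) (Real.rpow_pos_of_pos hB0 _)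
  have step1 : (2 * π * U) ^ 2 / ((1 + U ^ 2) ^ s₁ + (1 + V ^ 2) ^ s₂) ≤
      (2 * π) ^ 2 * A / (A ^ (θ * s₁) * B ^ ((1 - θ) * s₂)) := by
    apply div_le_div₀ (by positivity) _ hd0 hden
    have : (2 * π * U) ^ 2 = (2 * π) ^ 2 * U ^ 2 := by ring
    rw [this, hA]
    nlinarith [sq_nonneg U, sq_nonneg π, Real.pi_pos]
  refine step1.trans (le_of_eq ?_)
  rw [mul_div_assoc, div_mul_eq_div_div, div_eq_mul_inv (A / _),
    show A / A ^ (θ * s₁) = A ^ (1 : ℝ) / A ^ (θ * s₁) by rw [Real.rpow_one],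
    ← Real.rpow_sub hA0, ← Real.rpow_neg hB0.le,
    show (1 : ℝ) - θ * s₁ = -(θ * s₁ - 1) by ring]

lemma sqrt_add_le (a b : ℝ) (ha : 0 ≤ a) (hb : 0 ≤ b) :
    Real.sqrt (a + b) ≤ Real.sqrt a + Real.sqrt b := by
  have h := Real.sqrt_le_sqrt (show a + b ≤ (Real.sqrt a + Real.sqrt b) ^ 2 by
    nlinarith [Real.sq_sqrt ha, Real.sq_sqrt hb, Real.sqrt_nonneg a, Real.sqrt_nonneg b,
      mul_nonneg (Real.sqrt_nonneg a) (Real.sqrt_nonneg b)])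
  rwa [Real.sqrt_sq (by positivity)] at h

/-- the crucial estimate `‖∂_x f‖_{L^∞} ≲ ‖f‖_{H^{s₁,s₂}_ω}` for
trigonometric polynomials, where `∂_x f(x) = Σ_n 2πi(ω·n) f̂(n) e^{2πi n·x}` is
the tangential derivative along `ω`, `ω⊥ = (ω₂, −ω₁)`, `s₂ > 1/2`,
`s₁ > 3s₂/(2s₂−1)`. -/
theorem stmt_4 (ω : ℝ × ℝ) (hω : ω ≠ 0) (s₁ s₂ : ℝ)
    (hs₂ : 1 / 2 < s₂) (hs₁ : 3 * s₂ / (2 * s₂ - 1) < s₁) :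
    ∃ C : ℝ, ∀ c : ℤ × ℤ → ℂ, (Function.support c).Finite → ∀ x : ℝ × ℝ,
      ‖∑' n : ℤ × ℤ,
          2 * Real.pi * Complex.I * ((ω.1 * (n.1 : ℝ) + ω.2 * (n.2 : ℝ) : ℝ) : ℂ) * c n *
            Complex.exp (2 * Real.pi * Complex.I *
              (((n.1 : ℝ) * x.1 + (n.2 : ℝ) * x.2 : ℝ) : ℂ))‖ ≤ C *
        ((∑' n : ℤ × ℤ,
            (1 + (ω.1 * (n.1 : ℝ) + ω.2 * (n.2 : ℝ)) ^ 2) ^ s₁ * ‖c n‖ ^ 2) ^ ((1 : ℝ) / 2) +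
         (∑' n : ℤ × ℤ,
            (1 + (ω.2 * (n.1 : ℝ) - ω.1 * (n.2 : ℝ)) ^ 2) ^ s₂ * ‖c n‖ ^ 2) ^ ((1 : ℝ) / 2)) := by
  have hs₂' : (0 : ℝ) < 2 * s₂ - 1 := by linarith
  have hs₂0 : (0 : ℝ) < s₂ := by linarith
  have hs₁0 : (0 : ℝ) < s₁ := lt_trans (div_pos (by linarith) hs₂') hs₁
  set θ : ℝ := (3 / (2 * s₁) + (1 - 1 / (2 * s₂))) / 2 with hθdef
  have hgap : 3 / (2 * s₁) < 1 - 1 / (2 * s₂) := by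
    have hkey : 3 * s₂ < s₁ * (2 * s₂ - 1) := by
      rw [div_lt_iff₀ hs₂'] at hs₁; linarith
    have e : 1 - 1 / (2 * s₂) - 3 / (2 * s₁) =
        (s₁ * (2 * s₂ - 1) - 3 * s₂) / (2 * s₁ * s₂) := by
      field_simp
    have h0 : 0 < 1 - 1 / (2 * s₂) - 3 / (2 * s₁) := by
      rw [e]; exact div_pos (by linarith) (by positivity)
    linarith
  have hθl : 3 / (2 * s₁) < θ := by rw [hθdef]; linarith
  have hθr : θ < 1 - 1 / (2 * s₂) := by rw [hθdef]; linarith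
  have hθ0 : 0 ≤ θ := le_of_lt (lt_trans (by positivity) hθl)
  have hθ1 : θ ≤ 1 := by
    have h1 : 0 < 1 / (2 * s₂) := by positivity
    linarith
  have hα : 1 / 2 < θ * s₁ - 1 := by
    have h3 := (div_lt_iff₀ (by positivity : (0:ℝ) < 2 * s₁)).1 hθl
    nlinarith
  have hβ : 1 / 2 < (1 - θ) * s₂ := by
    have h4 : 1 / (2 * s₂) < 1 - θ := by linarith
    have h5 := (div_lt_iff₀ (by positivity : (0:ℝ) < 2 * s₂)).1 h4
    nlinarith
  have hSum0 := (aux_sum_2d ω hω hα hβ).mul_left ((2 * π) ^ 2)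
  have hq : Summable (fun n : ℤ × ℤ =>
      (2 * π * (ω.1 * (n.1 : ℝ) + ω.2 * (n.2 : ℝ))) ^ 2 /
        ((1 + (ω.1 * (n.1 : ℝ) + ω.2 * (n.2 : ℝ)) ^ 2) ^ s₁ +
         (1 + (ω.2 * (n.1 : ℝ) - ω.1 * (n.2 : ℝ)) ^ 2) ^ s₂)) := by
    apply Summable.of_nonneg_of_le _ (fun n => pointwise_bound hθ0 hθ1 _ _) hSum0
    intro n
    positivity
  set K : ℝ := ∑' n : ℤ × ℤ,
      (2 * π * (ω.1 * (n.1 : ℝ) + ω.2 * (n.2 : ℝ))) ^ 2 /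
        ((1 + (ω.1 * (n.1 : ℝ) + ω.2 * (n.2 : ℝ)) ^ 2) ^ s₁ +
         (1 + (ω.2 * (n.1 : ℝ) - ω.1 * (n.2 : ℝ)) ^ 2) ^ s₂) with hKdef
  have hK0 : 0 ≤ K := tsum_nonneg (fun n => by positivity)
  refine ⟨Real.sqrt K, ?_⟩
  intro c hc x
  classical
  set s : Finset (ℤ × ℤ) := hc.toFinset with hsdef
  have hcz : ∀ n ∉ s, c n = 0 := by
    intro n hn
    rw [hsdef, Set.Finite.mem_toFinset] at hn
    exact Function.notMem_support.mp hn
  -- rewrite all three tsums as finite sums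
  rw [tsum_eq_sum (s := s) (fun n hn => by rw [hcz n hn]; ring),
    tsum_eq_sum (s := s) (fun n hn => by rw [hcz n hn]; simp),
    tsum_eq_sum (s := s) (fun n hn => by rw [hcz n hn]; simp)]
  -- per-term norm
  have hexp : ∀ r : ℝ, ‖Complex.exp (2 * (π:ℂ) * Complex.I * (r:ℂ))‖ = 1 := by
    intro r
    rw [show (2 * (π:ℂ) * Complex.I * (r:ℂ)) = ((2 * π * r : ℝ):ℂ) * Complex.I by
      push_cast; ring]
    exact Complex.norm_exp_ofReal_mul_I _
  have hnorm : ∀ n : ℤ × ℤ,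
      ‖2 * (π:ℂ) * Complex.I * ((ω.1 * (n.1 : ℝ) + ω.2 * (n.2 : ℝ) : ℝ) : ℂ) * c n *
        Complex.exp (2 * (π:ℂ) * Complex.I * (((n.1 : ℝ) * x.1 + (n.2 : ℝ) * x.2 : ℝ) : ℂ))‖ =
      2 * π * |ω.1 * (n.1 : ℝ) + ω.2 * (n.2 : ℝ)| * ‖c n‖ := by
    intro n
    rw [norm_mul, hexp, mul_one, norm_mul,
      show (2 * (π:ℂ) * Complex.I * ((ω.1 * (n.1:ℝ) + ω.2 * (n.2:ℝ) : ℝ) : ℂ)) =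
        (((2 * π) * (ω.1 * (n.1:ℝ) + ω.2 * (n.2:ℝ)) : ℝ) : ℂ) * Complex.I from by
          push_cast; ring,
      norm_mul, Complex.norm_real, Complex.norm_I, mul_one, Real.norm_eq_abs, abs_mul,
      abs_of_pos (by positivity : (0:ℝ) < 2 * π)]
  -- abbreviations
  set S₁ : ℝ := ∑ n ∈ s, (1 + (ω.1 * (n.1 : ℝ) + ω.2 * (n.2 : ℝ)) ^ 2) ^ s₁ * ‖c n‖ ^ 2 with hS₁
  set S₂' : ℝ := ∑ n ∈ s, (1 + (ω.2 * (n.1 : ℝ) - ω.1 * (n.2 : ℝ)) ^ 2) ^ s₂ * ‖c n‖ ^ 2 with hS₂'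
  have hS₁0 : 0 ≤ S₁ := Finset.sum_nonneg fun n _ => by positivity
  have hS₂0 : 0 ≤ S₂' := Finset.sum_nonneg fun n _ => by positivity
  -- Cauchy-Schwarz
  have hCS : (∑ n ∈ s, 2 * π * |ω.1 * (n.1 : ℝ) + ω.2 * (n.2 : ℝ)| * ‖c n‖) ^ 2 ≤
      K * (S₁ + S₂') := by
    have hw : ∀ n : ℤ × ℤ, 0 < (1 + (ω.1 * (n.1 : ℝ) + ω.2 * (n.2 : ℝ)) ^ 2) ^ s₁ +
        (1 + (ω.2 * (n.1 : ℝ) - ω.1 * (n.2 : ℝ)) ^ 2) ^ s₂ := by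
      intro n; positivity
    have key := Finset.sum_mul_sq_le_sq_mul_sq s
      (fun n => 2 * π * |ω.1 * (n.1 : ℝ) + ω.2 * (n.2 : ℝ)| /
        Real.sqrt ((1 + (ω.1 * (n.1 : ℝ) + ω.2 * (n.2 : ℝ)) ^ 2) ^ s₁ +
          (1 + (ω.2 * (n.1 : ℝ) - ω.1 * (n.2 : ℝ)) ^ 2) ^ s₂))
      (fun n => Real.sqrt ((1 + (ω.1 * (n.1 : ℝ) + ω.2 * (n.2 : ℝ)) ^ 2) ^ s₁ +
          (1 + (ω.2 * (n.1 : ℝ) - ω.1 * (n.2 : ℝ)) ^ 2) ^ s₂) * ‖c n‖)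
    have e1 : ∀ n ∈ s, (2 * π * |ω.1 * (n.1 : ℝ) + ω.2 * (n.2 : ℝ)| /
        Real.sqrt ((1 + (ω.1 * (n.1 : ℝ) + ω.2 * (n.2 : ℝ)) ^ 2) ^ s₁ +
          (1 + (ω.2 * (n.1 : ℝ) - ω.1 * (n.2 : ℝ)) ^ 2) ^ s₂)) *
        (Real.sqrt ((1 + (ω.1 * (n.1 : ℝ) + ω.2 * (n.2 : ℝ)) ^ 2) ^ s₁ +
          (1 + (ω.2 * (n.1 : ℝ) - ω.1 * (n.2 : ℝ)) ^ 2) ^ s₂) * ‖c n‖) =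
        2 * π * |ω.1 * (n.1 : ℝ) + ω.2 * (n.2 : ℝ)| * ‖c n‖ := by
      intro n _
      have h := Real.sqrt_pos.2 (hw n)
      field_simp
    have e2 : ∀ n ∈ s, (2 * π * |ω.1 * (n.1 : ℝ) + ω.2 * (n.2 : ℝ)| /
        Real.sqrt ((1 + (ω.1 * (n.1 : ℝ) + ω.2 * (n.2 : ℝ)) ^ 2) ^ s₁ +
          (1 + (ω.2 * (n.1 : ℝ) - ω.1 * (n.2 : ℝ)) ^ 2) ^ s₂)) ^ 2 =
        (2 * π * (ω.1 * (n.1 : ℝ) + ω.2 * (n.2 : ℝ))) ^ 2 /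
          ((1 + (ω.1 * (n.1 : ℝ) + ω.2 * (n.2 : ℝ)) ^ 2) ^ s₁ +
           (1 + (ω.2 * (n.1 : ℝ) - ω.1 * (n.2 : ℝ)) ^ 2) ^ s₂) := by
      intro n _
      rw [div_pow, Real.sq_sqrt (hw n).le, mul_pow, mul_pow, sq_abs, mul_pow]
      ring
    have e3 : ∀ n ∈ s, (Real.sqrt ((1 + (ω.1 * (n.1 : ℝ) + ω.2 * (n.2 : ℝ)) ^ 2) ^ s₁ +
          (1 + (ω.2 * (n.1 : ℝ) - ω.1 * (n.2 : ℝ)) ^ 2) ^ s₂) * ‖c n‖) ^ 2 =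
        (1 + (ω.1 * (n.1 : ℝ) + ω.2 * (n.2 : ℝ)) ^ 2) ^ s₁ * ‖c n‖ ^ 2 +
        (1 + (ω.2 * (n.1 : ℝ) - ω.1 * (n.2 : ℝ)) ^ 2) ^ s₂ * ‖c n‖ ^ 2 := by
      intro n _
      rw [mul_pow, Real.sq_sqrt (hw n).le, add_mul]
    rw [Finset.sum_congr rfl e1] at key
    rw [Finset.sum_congr rfl e2, Finset.sum_congr rfl e3] at key
    rw [Finset.sum_add_distrib] at key
    refine key.trans ?_
    apply mul_le_mul_of_nonneg_right _ (by rw [← hS₁, ← hS₂']; positivity)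
    exact hq.sum_le_tsum s (fun n _ => by positivity)
  -- finish
  calc ‖∑ n ∈ s, 2 * (π:ℂ) * Complex.I * ((ω.1 * (n.1 : ℝ) + ω.2 * (n.2 : ℝ) : ℝ) : ℂ) * c n *
        Complex.exp (2 * (π:ℂ) * Complex.I * (((n.1 : ℝ) * x.1 + (n.2 : ℝ) * x.2 : ℝ) : ℂ))‖
      ≤ ∑ n ∈ s, ‖2 * (π:ℂ) * Complex.I * ((ω.1 * (n.1 : ℝ) + ω.2 * (n.2 : ℝ) : ℝ) : ℂ) * c n *
        Complex.exp (2 * (π:ℂ) * Complex.I * (((n.1 : ℝ) * x.1 + (n.2 : ℝ) * x.2 : ℝ) : ℂ))‖ :=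
        norm_sum_le _ _
    _ = ∑ n ∈ s, 2 * π * |ω.1 * (n.1 : ℝ) + ω.2 * (n.2 : ℝ)| * ‖c n‖ :=
        Finset.sum_congr rfl fun n _ => hnorm n
    _ ≤ Real.sqrt (K * (S₁ + S₂')) := by
        rw [Real.le_sqrt (Finset.sum_nonneg fun n _ => by positivity)
          (by positivity : 0 ≤ K * (S₁ + S₂'))]
        exact hCS
    _ = Real.sqrt K * Real.sqrt (S₁ + S₂') := Real.sqrt_mul hK0 _
    _ ≤ Real.sqrt K * (Real.sqrt S₁ + Real.sqrt S₂') := by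
        exact mul_le_mul_of_nonneg_left (sqrt_add_le _ _ hS₁0 hS₂0) (Real.sqrt_nonneg K)
    _ = Real.sqrt K * (S₁ ^ ((1:ℝ)/2) + S₂' ^ ((1:ℝ)/2)) := by
        simp [Real.sqrt_eq_rpow]
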